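/- (Corollary 3.6: recovering the values of a balanced function.) Let n ≥ 1 and let f : 𝔽₂ⁿ → 𝔽₂ᵐ be balanced: there are f₁, f₂ ∈ 𝔽₂ᵐ with f₁ ≠ f₂ such that f takes only the values f₁ and f₂, each on exactly 2^(n−1) inputs. Define λ ∈ 𝔽₂ᵐ by λᵢ = 1 if Σ_{x ∈ 𝔽₂ⁿ} (−1)^(f(x)·e_i) = 0 and λᵢ = 0 otherwise. Then λ = f₁ ⊕ f₂, and consequently the two values of f are f(0) and f(0) ⊕ λ, i.e. {f₁, f₂} = {f(0), f(0) ⊕ λ}. -/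

import Mathlib

/-- The sign `(−1)^a ∈ ℂ` associated to a bit `a ∈ 𝔽₂`. -/
noncomputable def sgn (a : ZMod 2) : ℂ := (-1 : ℂ) ^ a.val

/-- The pairing `x·z = Σᵢ xᵢ·zᵢ ∈ 𝔽₂` of two binary strings. -/
def dotp {k : ℕ} (x z : Fin k → ZMod 2) : ZMod 2 := ∑ i, x i * z i

/-- The `i`-th standard basis vector of `𝔽₂ᵏ`. -/
def stdBasis {k : ℕ} (i : Fin k) : Fin k → ZMod 2 :=
  fun j => if j = i then 1 else 0

lemma dotp_stdBasis {k : ℕ} (v : Fin k → ZMod 2) (i : Fin k) :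
    dotp v (stdBasis i) = v i := by
  unfold dotp stdBasis
  simp [mul_ite]

lemma sgn_add_zero (a b : ZMod 2) : sgn a + sgn b = 0 ↔ a + b = 1 := by
  have h1 : (ZMod.val (1 : ZMod 2)) = 1 := rfl
  fin_cases a <;> fin_cases b <;> simp [sgn, h1] <;> norm_num [ZMod.val] <;> decide

/-- Corollary 3.6: recovering the values of a balanced function.  If `f` is
balanced between `f₁ ≠ f₂`, and `λ ∈ 𝔽₂ᵐ` is defined by `λᵢ = 1` exactly when
`Σ_x (−1)^(f(x)·e_i) = 0`, then `λ = f₁ ⊕ f₂`, and the two values of `f` are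
`f(0)` and `f(0) ⊕ λ`. -/
theorem gpk_recovers_balanced_values {n m : ℕ} (hn : 1 ≤ n)
    (f : (Fin n → ZMod 2) → (Fin m → ZMod 2))
    (f₁ f₂ : Fin m → ZMod 2) (hne : f₁ ≠ f₂)
    (hval : ∀ x, f x = f₁ ∨ f x = f₂)
    (hcard₁ :
      (Finset.univ.filter (fun x : Fin n → ZMod 2 => f x = f₁)).card = 2 ^ (n - 1))
    (hcard₂ :
      (Finset.univ.filter (fun x : Fin n → ZMod 2 => f x = f₂)).card = 2 ^ (n - 1))
    (lam : Fin m → ZMod 2)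
    (hlam : ∀ i : Fin m, lam i =
      if (∑ x : Fin n → ZMod 2, sgn (dotp (f x) (stdBasis i))) = 0 then 1 else 0) :
    lam = f₁ + f₂ ∧
      ({f₁, f₂} : Set (Fin m → ZMod 2)) =
        {f (fun _ => 0), f (fun _ => 0) + lam} := by
  have hlamval : lam = f₁ + f₂ := by
    funext i
    have hsum : (∑ x : Fin n → ZMod 2, sgn (dotp (f x) (stdBasis i)))
        = (2 ^ (n - 1) : ℂ) * (sgn (f₁ i) + sgn (f₂ i)) := by
      have hsplit := Finset.sum_filter_add_sum_filter_not
        (Finset.univ : Finset (Fin n → ZMod 2))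
        (fun x => f x = f₁) (fun x => sgn (dotp (f x) (stdBasis i)))
      have hfilt : (Finset.univ.filter (fun x : Fin n → ZMod 2 => ¬ f x = f₁))
          = Finset.univ.filter (fun x : Fin n → ZMod 2 => f x = f₂) := by
        apply Finset.filter_congr
        intro x _
        rcases hval x with h | h <;> simp [h, hne, hne.symm]
      have h1 : (∑ x ∈ Finset.univ.filter (fun x : Fin n → ZMod 2 => f x = f₁),
          sgn (dotp (f x) (stdBasis i))) = (2 ^ (n - 1) : ℂ) * sgn (f₁ i) := by
        rw [Finset.sum_congr rfl (fun x hx => by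
          rw [dotp_stdBasis, (Finset.mem_filter.mp hx).2]),
          Finset.sum_const, hcard₁]
        simp [nsmul_eq_mul]
      have h2 : (∑ x ∈ Finset.univ.filter (fun x : Fin n → ZMod 2 => ¬ f x = f₁),
          sgn (dotp (f x) (stdBasis i))) = (2 ^ (n - 1) : ℂ) * sgn (f₂ i) := by
        rw [hfilt, Finset.sum_congr rfl (fun x hx => by
          rw [dotp_stdBasis, (Finset.mem_filter.mp hx).2]),
          Finset.sum_const, hcard₂]
        simp [nsmul_eq_mul]
      rw [← hsplit, h1, h2, mul_add]
    have hpow : (2 ^ (n - 1) : ℂ) ≠ 0 := pow_ne_zero _ two_ne_zero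
    have hiff : (2 ^ (n - 1) : ℂ) * (sgn (f₁ i) + sgn (f₂ i)) = 0 ↔ f₁ i + f₂ i = 1 := by
      rw [mul_eq_zero, or_iff_right hpow, sgn_add_zero]
    rw [hlam i, hsum]
    simp only [hiff]
    show _ = f₁ i + f₂ i
    by_cases h : f₁ i + f₂ i = 1
    · simp [h]
    · have h0 : f₁ i + f₂ i = 0 := by
        have hh : ∀ x : ZMod 2, x ≠ 1 → x = 0 := by decide
        exact hh _ h
      simp [h, h0]
  refine ⟨hlamval, ?_⟩
  have hcanc : ∀ a b : Fin m → ZMod 2, a + (a + b) = b := by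
    intro a b
    funext j
    change a j + (a j + b j) = b j
    rw [← add_assoc, CharTwo.add_self_eq_zero, zero_add]
  rcases hval (fun _ => 0) with h0 | h0
  · rw [h0, hlamval, hcanc]
  · rw [h0, hlamval]
    have : f₂ + (f₁ + f₂) = f₁ := by
      rw [add_comm f₁ f₂, hcanc]
    rw [this, Set.pair_comm]
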